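/- The subgroup N¹_{pq} = {(a^l,1) : 0 ≤ l ≤ pq−1} is the smallest normal subgroup of G_{p,q} with nilpotent quotient, i.e. G_{p,q}^{nil} = N¹_{pq}. Moreover, if x and y are elements of G_{p,q} of even order with x N¹_{pq} = y N¹_{pq}, then x and y are conjugate in G_{p,q}. -/

import Mathlib

open Multiplicative

namespace Mizerka

/-- The standing hypotheses: `p` and `q` are odd primes with `q ∣ p - 1`, and `i` is a
natural number with `i ≡ 1 (mod q)` whose multiplicative order modulo `p` equals `q`. -/
structure Hyp (p q i : ℕ) : Prop where
  hp : Nat.Prime p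
  hq : Nat.Prime q
  hoddp : Odd p
  hoddq : Odd q
  hdvd : q ∣ p - 1
  hmod : i ≡ 1 [MOD q]
  hord : orderOf (i : ZMod p) = q

namespace Hyp

variable {p q i : ℕ}

theorem coprime_q (h : Hyp p q i) : Nat.Coprime i q := by
  have h1 : i % q = 1 % q := h.hmod
  unfold Nat.Coprime
  rw [Nat.gcd_comm, Nat.gcd_rec, h1, ← Nat.gcd_rec, Nat.gcd_one_right]

theorem coprime_p (h : Hyp p q i) : Nat.Coprime i p := by
  haveI : NeZero p := ⟨h.hp.ne_zero⟩
  have hq1 : q - 1 + 1 = q := Nat.succ_pred_eq_of_pos h.hq.pos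
  have hmul : (i : ZMod p) * (i : ZMod p) ^ (q - 1) = 1 := by
    rw [← pow_succ', hq1, ← h.hord, pow_orderOf_eq_one]
  exact (ZMod.isUnit_iff_coprime i p).mp (isUnit_iff_exists_inv.mpr ⟨_, hmul⟩)

theorem coprime (h : Hyp p q i) : Nat.Coprime i (p * q) :=
  Nat.Coprime.mul_right h.coprime_p h.coprime_q

theorem pow_q_modeq (h : Hyp p q i) : i ^ q ≡ 1 [MOD p * q] := by
  have hpq : p ≠ q := by
    have h1 : 0 < p - 1 := by have := h.hp.two_le; omega
    have := Nat.le_of_dvd h1 h.hdvd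
    omega
  have hc : Nat.Coprime p q := (Nat.coprime_primes h.hp h.hq).mpr hpq
  rw [← Nat.modEq_and_modEq_iff_modEq_mul hc]
  constructor
  · haveI : NeZero p := ⟨h.hp.ne_zero⟩
    have hcast : ((i ^ q : ℕ) : ZMod p) = ((1 : ℕ) : ZMod p) := by
      push_cast
      rw [← h.hord, pow_orderOf_eq_one]
    exact (ZMod.natCast_eq_natCast_iff _ _ _).mp hcast
  · calc i ^ q ≡ 1 ^ q [MOD q] := h.hmod.pow q
      _ = 1 := one_pow q

/-- The unit of `ZMod (p*q)` determined by `i`. -/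
def unit (h : Hyp p q i) : (ZMod (p * q))ˣ := ZMod.unitOfCoprime i h.coprime

/-- The unit of `ZMod p` determined by `i`. -/
def unitP (h : Hyp p q i) : (ZMod p)ˣ := ZMod.unitOfCoprime i h.coprime_p

theorem unit_pow (h : Hyp p q i) : h.unit ^ q = 1 := by
  apply Units.ext
  have h2 : ((i ^ q : ℕ) : ZMod (p * q)) = ((1 : ℕ) : ZMod (p * q)) :=
    (ZMod.natCast_eq_natCast_iff _ _ _).mpr h.pow_q_modeq
  push_cast at h2
  simpa [Hyp.unit] using h2

theorem unitP_pow (h : Hyp p q i) : h.unitP ^ q = 1 := by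
  apply Units.ext
  have h2 : (i : ZMod p) ^ q = 1 := by rw [← h.hord]; exact pow_orderOf_eq_one _
  simpa [Hyp.unitP] using h2

end Hyp

/-- Multiplication by a unit, as an automorphism of the (multiplicatively written)
cyclic group `ZMod n`. -/
def zmodMulAut (n : ℕ) : (ZMod n)ˣ →* MulAut (Multiplicative (ZMod n)) where
  toFun u :=
    { toFun := fun x => ofAdd ((u : ZMod n) * x.toAdd)
      invFun := fun x => ofAdd (((u⁻¹ : (ZMod n)ˣ) : ZMod n) * x.toAdd)
      left_inv := fun x => by simp
      right_inv := fun x => by simp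
      map_mul' := fun x y => by simp [mul_add, ← ofAdd_add] }
  map_one' := by ext x; simp
  map_mul' u v := by ext x; simp [mul_assoc]

/-- The function underlying the automorphism of the dihedral group induced by
multiplication by a unit on the rotation part. -/
def dihedralAutFun (n : ℕ) (u : (ZMod n)ˣ) : DihedralGroup n → DihedralGroup n
  | .r j => .r ((u : ZMod n) * j)
  | .sr j => .sr ((u : ZMod n) * j)

/-- Multiplication of indices by a unit, as an automorphism of the dihedral group:
`a ↦ a^u`, `b ↦ b`. -/
def dihedralAut (n : ℕ) : (ZMod n)ˣ →* MulAut (DihedralGroup n) where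
  toFun u :=
    { toFun := dihedralAutFun n u
      invFun := dihedralAutFun n u⁻¹
      left_inv := fun x => by cases x <;> simp [dihedralAutFun]
      right_inv := fun x => by cases x <;> simp [dihedralAutFun]
      map_mul' := fun x y => by cases x <;> cases y <;> simp [dihedralAutFun, mul_add, mul_sub] }
  map_one' := by ext x; cases x <;> simp [dihedralAutFun]
  map_mul' u v := by ext x; cases x <;> simp [dihedralAutFun, mul_assoc]

/-- The homomorphism `ZMod q →* G` (written multiplicatively) sending `1` to a fixed
element `g` with `g ^ q = 1`. -/
def zmodPow {G : Type*} [Group G] (q : ℕ) [NeZero q] (g : G) (hg : g ^ q = 1) :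
    Multiplicative (ZMod q) →* G where
  toFun x := g ^ (toAdd x).val
  map_one' := by
    show g ^ (toAdd (1 : Multiplicative (ZMod q))).val = 1
    rw [toAdd_one, ZMod.val_zero, pow_zero]
  map_mul' x y := by
    have key : ∀ m : ℕ, g ^ (m % q) = g ^ m := fun m => by
      conv_rhs => rw [← Nat.div_add_mod m q]
      rw [pow_add, pow_mul, hg, one_pow, one_mul]
    show g ^ (toAdd (x * y)).val = g ^ (toAdd x).val * g ^ (toAdd y).val
    rw [toAdd_mul, ZMod.val_add, key, pow_add]

namespace Hyp

variable {p q i : ℕ}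

/-- The action of `C_q` on `C_{pq}` sending the generator to multiplication by `i`. -/
def phiN (h : Hyp p q i) : Multiplicative (ZMod q) →* MulAut (Multiplicative (ZMod (p * q))) :=
  haveI : NeZero q := ⟨h.hq.ne_zero⟩
  zmodPow q (zmodMulAut (p * q) h.unit) (by rw [← map_pow, h.unit_pow, map_one])

/-- The action of `C_q` on `D_{2pq}` sending the generator to `τ` (`τ(a) = a^i`, `τ(b) = b`). -/
def phiG (h : Hyp p q i) : Multiplicative (ZMod q) →* MulAut (DihedralGroup (p * q)) :=
  haveI : NeZero q := ⟨h.hq.ne_zero⟩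
  zmodPow q (dihedralAut (p * q) h.unit) (by rw [← map_pow, h.unit_pow, map_one])

/-- The action of `C_q` on `C_p` sending the generator to multiplication by `i`. -/
def phiF (h : Hyp p q i) : Multiplicative (ZMod q) →* MulAut (Multiplicative (ZMod p)) :=
  haveI : NeZero q := ⟨h.hq.ne_zero⟩
  zmodPow q (zmodMulAut p h.unitP) (by rw [← map_pow, h.unitP_pow, map_one])

end Hyp

/-- The group `N_{pq²} = ⟨a, c ∣ a^{pq} = c^q = 1, c a c⁻¹ = a^i⟩ = C_{pq} ⋊ C_q`. -/
abbrev Npq2 {p q i : ℕ} (h : Hyp p q i) : Type :=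
  Multiplicative (ZMod (p * q)) ⋊[h.phiN] Multiplicative (ZMod q)

/-- The group `G_{p,q} = D_{2pq} ⋊_φ C_q`. -/
abbrev Gpq {p q i : ℕ} (h : Hyp p q i) : Type :=
  DihedralGroup (p * q) ⋊[h.phiG] Multiplicative (ZMod q)

/-- The Frobenius group `F_{p,q} = C_p ⋊ C_q` (the nonabelian group of order `pq`). -/
abbrev Fpq {p q i : ℕ} (h : Hyp p q i) : Type :=
  Multiplicative (ZMod p) ⋊[h.phiF] Multiplicative (ZMod q)

variable {p q i : ℕ}

/-- The generator `a` of `N_{pq²}`. -/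
def aN (h : Hyp p q i) : Npq2 h := SemidirectProduct.inl (ofAdd 1)

/-- The generator `c` of `N_{pq²}`. -/
def cN (h : Hyp p q i) : Npq2 h := SemidirectProduct.inr (ofAdd 1)

/-- The generator `a` of `G_{p,q}`. -/
def aG (h : Hyp p q i) : Gpq h := SemidirectProduct.inl (DihedralGroup.r 1)

/-- The generator `b` of `G_{p,q}`. -/
def bG (h : Hyp p q i) : Gpq h := SemidirectProduct.inl (DihedralGroup.sr 0)

/-- The generator `c` of `G_{p,q}`. -/
def cG (h : Hyp p q i) : Gpq h := SemidirectProduct.inr (ofAdd 1)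

/-- The real conjugacy class `(g)^± = (g) ∪ (g⁻¹)`. -/
def realClass {G : Type*} [Group G] (g : G) : Set G := {x | IsConj g x ∨ IsConj g⁻¹ x}

/-- `N` is a normal subgroup whose quotient is an `ℓ`-group (the quotient has `ℓ`-power order,
i.e. `N` has `ℓ`-power index). -/
def OQuot {G : Type*} [Group G] (ℓ : ℕ) (N : Subgroup G) : Prop :=
  N.Normal ∧ ∃ k : ℕ, N.index = ℓ ^ k

/-- `H` is a large subgroup of `G`: it contains `O^ℓ(G)`, the smallest normal subgroup
with `ℓ`-group quotient, for some prime `ℓ`. -/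
def IsLarge {G : Type*} [Group G] (H : Subgroup G) : Prop :=
  ∃ ℓ : ℕ, Nat.Prime ℓ ∧
    ∃ N : Subgroup G, OQuot ℓ N ∧ (∀ M : Subgroup G, OQuot ℓ M → N ≤ M) ∧ N ≤ H

section Reps

variable {k : Type*} [CommSemiring k] {G : Type*} [Group G]

/-- The subspace `V^H` of `H`-fixed vectors of a representation. -/
def fixedPts {V : Type*} [AddCommMonoid V] [Module k V]
    (ρ : Representation k G V) (H : Subgroup G) : Submodule k V where
  carrier := {v | ∀ g ∈ H, ρ g v = v}
  add_mem' := by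
    intro a b ha hb g hg
    rw [map_add, ha g hg, hb g hg]
  zero_mem' := by
    intro g hg
    rw [map_zero]
  smul_mem' := by
    intro c v hv g hg
    rw [map_smul, hv g hg]

end Reps

/-- The weak gap condition for a real representation: `dim V^P ≥ 2 dim V^H` for all
`P < H ≤ G` with `P` of prime power order. -/
def WeakGap {G : Type*} [Group G] {V : Type*} [AddCommGroup V] [Module ℝ V]
    (ρ : Representation ℝ G V) : Prop :=
  ∀ P H : Subgroup G, P < H → (∃ ℓ k : ℕ, Nat.Prime ℓ ∧ Nat.card P = ℓ ^ k) →
    2 * Module.finrank ℝ (fixedPts ρ H) ≤ Module.finrank ℝ (fixedPts ρ P)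

/-- Isomorphism of real representations: an equivariant linear equivalence. -/
def RepIso {G : Type*} [Group G] {U V : Type*} [AddCommGroup U] [Module ℝ U]
    [AddCommGroup V] [Module ℝ V]
    (ρU : Representation ℝ G U) (ρV : Representation ℝ G V) : Prop :=
  ∃ e : U ≃ₗ[ℝ] V, ∀ (g : G) (u : U), e (ρU g u) = ρV g (e u)

/-- Two real representations are `𝒫`-matched if their restrictions to every subgroup of
prime power order are isomorphic. -/
def PMatched {G : Type*} [Group G] {U V : Type*} [AddCommGroup U] [Module ℝ U]
    [AddCommGroup V] [Module ℝ V]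
    (ρU : Representation ℝ G U) (ρV : Representation ℝ G V) : Prop :=
  ∀ P : Subgroup G, (∃ ℓ k : ℕ, Nat.Prime ℓ ∧ Nat.card P = ℓ ^ k) →
    RepIso (ρU.comp P.subtype) (ρV.comp P.subtype)

/-- A bundled finite-dimensional-free real representation of `G`. -/
structure RealRep (G : Type*) [Group G] where
  carrier : Type
  [acg : AddCommGroup carrier]
  [mod : Module ℝ carrier]
  rho : Representation ℝ G carrier

attribute [instance] RealRep.acg RealRep.mod

theorem dihedralAut_pow_r (n : ℕ) (u : (ZMod n)ˣ) (k : ℕ) (m : ZMod n) :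
    ((dihedralAut n u) ^ k) (DihedralGroup.r m)
      = DihedralGroup.r (((u ^ k : (ZMod n)ˣ) : ZMod n) * m) := by
  induction k generalizing m with
  | zero => simp
  | succ k ih =>
    rw [pow_succ, MulAut.mul_apply]
    have h1 : (dihedralAut n u) (DihedralGroup.r m) = DihedralGroup.r ((u : ZMod n) * m) := rfl
    rw [h1, ih, pow_succ, Units.val_mul, mul_assoc]

theorem Hyp.phiG_r (h : Hyp p q i) (z : Multiplicative (ZMod q)) (m : ZMod (p * q)) :
    h.phiG z (DihedralGroup.r m)
      = DihedralGroup.r (((h.unit ^ (toAdd z).val : (ZMod (p * q))ˣ) : ZMod (p * q)) * m) := by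
  have h1 : h.phiG z = (dihedralAut (p * q) h.unit) ^ (toAdd z).val := rfl
  rw [h1, dihedralAut_pow_r]

theorem r_inv (n : ℕ) (m : ZMod n) : (DihedralGroup.r m)⁻¹ = DihedralGroup.r (-m) := rfl

/-- The subgroup `N_{pq²} = {(aˡ, cᵐ)}` of `G_{p,q}`. -/
def NSub (h : Hyp p q i) : Subgroup (Gpq h) where
  carrier := {x | ∃ l : ZMod (p * q), x.left = DihedralGroup.r l}
  one_mem' := ⟨0, rfl⟩
  mul_mem' := by
    rintro x y ⟨lx, hx⟩ ⟨ly, hy⟩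
    refine ⟨lx + (h.unit ^ (toAdd x.right).val : (ZMod (p * q))ˣ) * ly, ?_⟩
    rw [SemidirectProduct.mul_left, hx, hy, h.phiG_r, DihedralGroup.r_mul_r]
  inv_mem' := by
    rintro x ⟨lx, hx⟩
    refine ⟨-((h.unit ^ (toAdd x.right⁻¹).val : (ZMod (p * q))ˣ) * lx), ?_⟩
    rw [SemidirectProduct.inv_left, hx, r_inv, h.phiG_r]
    congr 1
    ring

/-- The subgroup `N_{2pq} = {(bᵉaˡ, 1)} ≅ D_{2pq}` of `G_{p,q}`. -/
def N2pqSub (h : Hyp p q i) : Subgroup (Gpq h) :=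
  MonoidHom.ker SemidirectProduct.rightHom

/-- The subgroup `N¹_{pq} = {(aˡ, 1)}` of `G_{p,q}`. -/
def NpqOneSub (h : Hyp p q i) : Subgroup (Gpq h) where
  carrier := {x | x.right = 1 ∧ ∃ l : ZMod (p * q), x.left = DihedralGroup.r l}
  one_mem' := ⟨rfl, 0, rfl⟩
  mul_mem' := by
    rintro x y ⟨hx1, lx, hx⟩ ⟨hy1, ly, hy⟩
    refine ⟨by rw [SemidirectProduct.mul_right, hx1, hy1, mul_one],
      lx + (h.unit ^ (toAdd x.right).val : (ZMod (p * q))ˣ) * ly, ?_⟩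
    rw [SemidirectProduct.mul_left, hx, hy, h.phiG_r, DihedralGroup.r_mul_r]
  inv_mem' := by
    rintro x ⟨hx1, lx, hx⟩
    refine ⟨by rw [SemidirectProduct.inv_right, hx1, inv_one],
      -((h.unit ^ (toAdd x.right⁻¹).val : (ZMod (p * q))ˣ) * lx), ?_⟩
    rw [SemidirectProduct.inv_left, hx, r_inv, h.phiG_r]
    congr 1
    ring

/-- The subgroup `N²_{pq} = {(a^{qs}, cᵐ)}` of `G_{p,q}`. -/
def NpqTwoSub (h : Hyp p q i) : Subgroup (Gpq h) where
  carrier := {x | ∃ s : ZMod (p * q), x.left = DihedralGroup.r ((q : ZMod (p * q)) * s)}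
  one_mem' := ⟨0, by simp⟩
  mul_mem' := by
    rintro x y ⟨sx, hx⟩ ⟨sy, hy⟩
    refine ⟨sx + (h.unit ^ (toAdd x.right).val : (ZMod (p * q))ˣ) * sy, ?_⟩
    rw [SemidirectProduct.mul_left, hx, hy, h.phiG_r, DihedralGroup.r_mul_r]
    congr 1
    ring
  inv_mem' := by
    rintro x ⟨sx, hx⟩
    refine ⟨-((h.unit ^ (toAdd x.right⁻¹).val : (ZMod (p * q))ˣ) * sx), ?_⟩
    rw [SemidirectProduct.inv_left, hx, r_inv, h.phiG_r]
    congr 1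
    ring

/-- The subgroup `N_p = {(a^{qs}, 1)}` of `G_{p,q}`. -/
def NpSub (h : Hyp p q i) : Subgroup (Gpq h) where
  carrier := {x | x.right = 1 ∧ ∃ s : ZMod (p * q), x.left = DihedralGroup.r ((q : ZMod (p * q)) * s)}
  one_mem' := ⟨rfl, 0, by simp⟩
  mul_mem' := by
    rintro x y ⟨hx1, sx, hx⟩ ⟨hy1, sy, hy⟩
    refine ⟨by rw [SemidirectProduct.mul_right, hx1, hy1, mul_one],
      sx + (h.unit ^ (toAdd x.right).val : (ZMod (p * q))ˣ) * sy, ?_⟩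
    rw [SemidirectProduct.mul_left, hx, hy, h.phiG_r, DihedralGroup.r_mul_r]
    congr 1
    ring
  inv_mem' := by
    rintro x ⟨hx1, sx, hx⟩
    refine ⟨by rw [SemidirectProduct.inv_right, hx1, inv_one],
      -((h.unit ^ (toAdd x.right⁻¹).val : (ZMod (p * q))ˣ) * sx), ?_⟩
    rw [SemidirectProduct.inv_left, hx, r_inv, h.phiG_r]
    congr 1
    ring

/-- The subgroup `N_q = {(a^{ps}, 1)}` of `G_{p,q}`. -/
def NqSub (h : Hyp p q i) : Subgroup (Gpq h) where
  carrier := {x | x.right = 1 ∧ ∃ s : ZMod (p * q), x.left = DihedralGroup.r ((p : ZMod (p * q)) * s)}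
  one_mem' := ⟨rfl, 0, by simp⟩
  mul_mem' := by
    rintro x y ⟨hx1, sx, hx⟩ ⟨hy1, sy, hy⟩
    refine ⟨by rw [SemidirectProduct.mul_right, hx1, hy1, mul_one],
      sx + (h.unit ^ (toAdd x.right).val : (ZMod (p * q))ˣ) * sy, ?_⟩
    rw [SemidirectProduct.mul_left, hx, hy, h.phiG_r, DihedralGroup.r_mul_r]
    congr 1
    ring
  inv_mem' := by
    rintro x ⟨hx1, sx, hx⟩
    refine ⟨by rw [SemidirectProduct.inv_right, hx1, inv_one],
      -((h.unit ^ (toAdd x.right⁻¹).val : (ZMod (p * q))ˣ) * sx), ?_⟩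
    rw [SemidirectProduct.inv_left, hx, r_inv, h.phiG_r]
    congr 1
    ring

section Statement17Aux

theorem dihedralAut_pow_sr (n : ℕ) (u : (ZMod n)ˣ) (k : ℕ) (m : ZMod n) :
    ((dihedralAut n u) ^ k) (DihedralGroup.sr m)
      = DihedralGroup.sr (((u ^ k : (ZMod n)ˣ) : ZMod n) * m) := by
  induction k generalizing m with
  | zero => simp
  | succ k ih =>
    rw [pow_succ, MulAut.mul_apply]
    have h1 : (dihedralAut n u) (DihedralGroup.sr m) = DihedralGroup.sr ((u : ZMod n) * m) := rfl
    rw [h1, ih, pow_succ, Units.val_mul, mul_assoc]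

theorem Hyp.phiG_sr {p q i : ℕ} (h : Hyp p q i) (z : Multiplicative (ZMod q)) (m : ZMod (p * q)) :
    h.phiG z (DihedralGroup.sr m)
      = DihedralGroup.sr (((h.unit ^ (toAdd z).val : (ZMod (p * q))ˣ) : ZMod (p * q)) * m) := by
  have h1 : h.phiG z = (dihedralAut (p * q) h.unit) ^ (toAdd z).val := rfl
  rw [h1, dihedralAut_pow_sr]

/-- Parity function on the dihedral group. -/
def parDFun (n : ℕ) : DihedralGroup n → Multiplicative (ZMod 2)
  | .r _ => 1
  | .sr _ => ofAdd 1

/-- Parity homomorphism on the dihedral group. -/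
def parD (n : ℕ) : DihedralGroup n →* Multiplicative (ZMod 2) where
  toFun := parDFun n
  map_one' := by rfl
  map_mul' := by rintro (a | a) (b | b) <;> simp [parDFun] <;> decide

theorem parD_r (n : ℕ) (m : ZMod n) : parD n (DihedralGroup.r m) = 1 := rfl

theorem parD_sr (n : ℕ) (m : ZMod n) : parD n (DihedralGroup.sr m) = ofAdd 1 := rfl

theorem parD_phiG {p q i : ℕ} (h : Hyp p q i) (z : Multiplicative (ZMod q))
    (d : DihedralGroup (p * q)) : parD (p * q) (h.phiG z d) = parD (p * q) d := by
  cases d with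
  | r m => rw [h.phiG_r]; rfl
  | sr m => rw [h.phiG_sr]; rfl

/-- The homomorphism `G_{p,q} →* C₂ × C_q` with kernel `N¹_{pq}`. -/
def PG {p q i : ℕ} (h : Hyp p q i) :
    Gpq h →* Multiplicative (ZMod 2) × Multiplicative (ZMod q) where
  toFun x := (parD (p * q) x.left, x.right)
  map_one' := by
    simp [SemidirectProduct.one_left, SemidirectProduct.one_right]
  map_mul' x y := by
    have h1 : (x * y).left = x.left * h.phiG x.right y.left := rfl
    have h2 : (x * y).right = x.right * y.right := rfl
    ext
    · show toAdd (parD (p*q) (x*y).left) = toAdd (parD (p*q) x.left * parD (p*q) y.left)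
      rw [h1, map_mul, parD_phiG]
    · show toAdd ((x*y).right) = toAdd (x.right * y.right)
      rw [h2]

theorem mem_NpqOneSub_iff {p q i : ℕ} (h : Hyp p q i) (x : Gpq h) :
    x ∈ NpqOneSub h ↔ PG h x = 1 := by
  constructor
  · rintro ⟨h1, l, hl⟩
    have : PG h x = (parD (p * q) x.left, x.right) := rfl
    rw [this, hl, h1, parD_r]
    rfl
  · intro hx
    have h1 : parD (p * q) x.left = 1 := congrArg Prod.fst hx
    have h2 : x.right = 1 := congrArg Prod.snd hx
    refine ⟨h2, ?_⟩
    cases hl : x.left with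
    | r m => exact ⟨m, rfl⟩
    | sr m =>
      rw [hl, parD_sr] at h1
      exact absurd h1 (by decide)

theorem NpqOneSub_eq_ker {p q i : ℕ} (h : Hyp p q i) : NpqOneSub h = (PG h).ker :=
  Subgroup.ext fun x => (mem_NpqOneSub_iff h x).trans MonoidHom.mem_ker.symm

theorem NpqOneSub_normal {p q i : ℕ} (h : Hyp p q i) : (NpqOneSub h).Normal := by
  rw [NpqOneSub_eq_ker h]; exact MonoidHom.normal_ker _

theorem aG_pow {p q i : ℕ} (h : Hyp p q i) (l : ZMod (p * q)) :
    aG h ^ l.val = SemidirectProduct.inl (DihedralGroup.r l) := by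
  haveI : NeZero (p * q) := ⟨Nat.mul_ne_zero h.hp.ne_zero h.hq.ne_zero⟩
  rw [aG, ← map_pow, DihedralGroup.r_one_pow]
  congr 1
  rw [ZMod.natCast_val, ZMod.cast_id]

open scoped commutatorElement in
theorem aG_mem_lowerCentralSeries {p q i : ℕ} (h : Hyp p q i) (n : ℕ) :
    aG h ∈ Subgroup.lowerCentralSeries (⊤ : Subgroup (Gpq h)) n := by
  have hpq : Odd (p * q) := h.hoddp.mul h.hoddq
  have hu2 : IsUnit (2 : ZMod (p * q)) := by
    have hc : ((2 : ℕ) : ZMod (p * q)) = 2 := by norm_cast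
    rw [← hc, ZMod.isUnit_iff_coprime]
    refine (Nat.Prime.coprime_iff_not_dvd Nat.prime_two).mpr ?_
    rw [Nat.odd_iff] at hpq
    omega
  haveI : NeZero (p * q) := ⟨Nat.mul_ne_zero h.hp.ne_zero h.hq.ne_zero⟩
  set k : ZMod (p * q) := (((p * q - 1) / 2 : ℕ) : ZMod (p * q)) with hk_def
  have hpos : 1 ≤ p * q := Nat.one_le_iff_ne_zero.mpr (Nat.mul_ne_zero h.hp.ne_zero h.hq.ne_zero)
  have h2k : 2 * ((p * q - 1) / 2) = p * q - 1 := by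
    rw [Nat.odd_iff] at hpq; omega
  have hk : (2 : ZMod (p * q)) * k = -1 := by
    rw [hk_def]
    have : (2 : ZMod (p * q)) * (((p * q - 1) / 2 : ℕ) : ZMod (p * q))
        = ((2 * ((p * q - 1) / 2) : ℕ) : ZMod (p * q)) := by push_cast; ring
    rw [this, h2k, Nat.cast_sub hpos]
    simp [ZMod.natCast_self]
  induction n with
  | zero => simp [lowerCentralSeries_zero]
  | succ n ih =>
    have hmem : SemidirectProduct.inl (DihedralGroup.r k) ∈ Subgroup.lowerCentralSeries (⊤ : Subgroup (Gpq h)) n := by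
      rw [← aG_pow h k]
      exact pow_mem ih k.val
    have hcomm : ⁅SemidirectProduct.inl (DihedralGroup.r k)
        (φ := h.phiG), bG h⁆ = (aG h)⁻¹ := by
      rw [commutatorElement_def, bG, aG, ← map_inv, ← map_inv, ← map_inv, ← map_mul, ← map_mul, ← map_mul]
      congr 1
      have h1 : (DihedralGroup.r k : DihedralGroup (p*q))⁻¹ = DihedralGroup.r (-k) := rfl
      have h2 : (DihedralGroup.sr 0 : DihedralGroup (p*q))⁻¹ = DihedralGroup.sr 0 := rfl
      have h3 : (DihedralGroup.r 1 : DihedralGroup (p*q))⁻¹ = DihedralGroup.r (-1) := rfl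
      rw [h1, h2, h3, DihedralGroup.r_mul_sr, DihedralGroup.sr_mul_r, DihedralGroup.sr_mul_sr]
      congr 1
      rw [← hk]
      ring
    have : (aG h)⁻¹ ∈ Subgroup.lowerCentralSeries (⊤ : Subgroup (Gpq h)) (n + 1) := by
      rw [← hcomm]
      exact Subgroup.commutator_mem_commutator hmem (Subgroup.mem_top _)
    simpa using (Subgroup.lowerCentralSeries (⊤ : Subgroup (Gpq h)) (n + 1)).inv_mem this

theorem two_isUnit {p q i : ℕ} (h : Hyp p q i) : IsUnit (2 : ZMod (p * q)) := by
  have hpq : Odd (p * q) := h.hoddp.mul h.hoddq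
  have hc : ((2 : ℕ) : ZMod (p * q)) = 2 := by norm_cast
  rw [← hc, ZMod.isUnit_iff_coprime]
  refine (Nat.Prime.coprime_iff_not_dvd Nat.prime_two).mpr ?_
  rw [Nat.odd_iff] at hpq
  omega

theorem coprime_two_q {p q i : ℕ} (h : Hyp p q i) : Nat.Coprime 2 q := by
  have := h.hoddq
  rw [Nat.odd_iff] at this
  exact (Nat.Prime.coprime_iff_not_dvd Nat.prime_two).mpr (by omega)

theorem t_isUnit {p q i : ℕ} (h : Hyp p q i) (w : ℕ) :
    IsUnit (1 + ((h.unit ^ w : (ZMod (p * q))ˣ) : ZMod (p * q))) := by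
  haveI : NeZero p := ⟨h.hp.ne_zero⟩
  haveI : NeZero q := ⟨h.hq.ne_zero⟩
  haveI : NeZero (p * q) := ⟨Nat.mul_ne_zero h.hp.ne_zero h.hq.ne_zero⟩
  haveI : Fact p.Prime := ⟨h.hp⟩
  have h1 : ((h.unit : (ZMod (p * q))ˣ) : ZMod (p * q)) = (i : ZMod (p * q)) := rfl
  rw [Units.val_pow_eq_pow_val, h1]
  have h2 : (1 : ZMod (p * q)) + (i : ZMod (p * q)) ^ w = ((1 + i ^ w : ℕ) : ZMod (p * q)) := by
    push_cast; ring
  rw [h2, ZMod.isUnit_iff_coprime]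
  apply Nat.Coprime.mul_right
  · refine (ZMod.isUnit_iff_coprime _ p).mp ?_
    rw [isUnit_iff_ne_zero]
    intro hc
    push_cast at hc
    have hneg : (i : ZMod p) ^ w = -1 := by linear_combination hc
    have hsq : (i : ZMod p) ^ (w * 2) = 1 := by rw [pow_mul, hneg]; ring
    have h3 : q ∣ w * 2 := h.hord ▸ orderOf_dvd_of_pow_eq_one hsq
    have h4 : q ∣ w := ((coprime_two_q h).symm).dvd_of_dvd_mul_right h3
    have h6 : (i : ZMod p) ^ w = 1 := orderOf_dvd_iff_pow_eq_one.mp (h.hord ▸ h4)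
    rw [h6] at hneg
    have h7 : ((2 : ℕ) : ZMod p) = 0 := by push_cast; linear_combination hneg
    have h8 : p ∣ 2 := (ZMod.natCast_eq_zero_iff 2 p).mp h7
    have h9 := h.hoddp
    have h10 := h.hp.two_le
    rw [Nat.odd_iff] at h9
    have := Nat.le_of_dvd (by omega) h8
    omega
  · refine (ZMod.isUnit_iff_coprime _ q).mp ?_
    have hiq : (i : ZMod q) = 1 := by
      have := (ZMod.natCast_eq_natCast_iff i 1 q).mpr h.hmod
      simpa using this
    push_cast
    rw [hiq, one_pow]
    have h3 : (1 : ZMod q) + 1 = ((2 : ℕ) : ZMod q) := by push_cast; ring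
    rw [h3, ZMod.isUnit_iff_coprime]
    exact coprime_two_q h

theorem even_order_left_sr {p q i : ℕ} (h : Hyp p q i) (x : Gpq h) (hx : 2 ∣ orderOf x) :
    ∃ j, x.left = DihedralGroup.sr j := by
  haveI : NeZero q := ⟨h.hq.ne_zero⟩
  haveI : NeZero (p * q) := ⟨Nat.mul_ne_zero h.hp.ne_zero h.hq.ne_zero⟩
  haveI : Finite (Gpq h) :=
    Finite.of_injective (fun x : Gpq h => (x.left, x.right))
      (by intro a b hab
          have h1 : a.left = b.left := congrArg Prod.fst hab
          have h2 : a.right = b.right := congrArg Prod.snd hab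
          calc a = SemidirectProduct.inl a.left * SemidirectProduct.inr a.right :=
              (SemidirectProduct.inl_left_mul_inr_right a).symm
            _ = b := by rw [h1, h2]; exact SemidirectProduct.inl_left_mul_inr_right b)
  cases hl : x.left with
  | sr j => exact ⟨j, rfl⟩
  | r j =>
    exfalso
    set n := orderOf x with hn
    have hn0 : n ≠ 0 := (orderOf_pos x).ne'
    set y := x ^ (n / 2) with hy
    have hy2 : y * y = 1 := by
      rw [hy, ← pow_add]
      have hadd : n / 2 + n / 2 = n := by omega
      rw [hadd, hn, pow_orderOf_eq_one]
    have hyne : y ≠ 1 := by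
      intro h1
      have h2 := orderOf_dvd_of_pow_eq_one h1
      rw [← hn] at h2
      have := Nat.le_of_dvd (by omega) h2
      omega
    have hyN : y ∈ NSub h := pow_mem (show x ∈ NSub h from ⟨j, hl⟩) _
    obtain ⟨l, hyl⟩ := hyN
    have hyr : y.right = 1 := by
      have h2 : y.right * y.right = 1 := by
        rw [← SemidirectProduct.mul_right, hy2]; rfl
      have hq2 : y.right ^ 2 = 1 := by rw [pow_two]; exact h2
      have hqq : y.right ^ q = 1 := by
        have h3 : toAdd (y.right ^ q) = 0 := by
          rw [toAdd_pow, nsmul_eq_mul, ZMod.natCast_self, zero_mul]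
        calc y.right ^ q = ofAdd (toAdd (y.right ^ q)) := rfl
          _ = ofAdd 0 := by rw [h3]
          _ = 1 := rfl
      have hd : orderOf y.right ∣ Nat.gcd 2 q :=
        Nat.dvd_gcd (orderOf_dvd_of_pow_eq_one hq2) (orderOf_dvd_of_pow_eq_one hqq)
      rw [coprime_two_q h, Nat.dvd_one] at hd
      exact orderOf_eq_one_iff.mp hd
    have hleft : (y * y).left = DihedralGroup.r (l + l) := by
      rw [SemidirectProduct.mul_left, hyl, hyr, map_one, MulAut.one_apply,
        DihedralGroup.r_mul_r]
    have hll : DihedralGroup.r (l + l) = (DihedralGroup.r 0 : DihedralGroup (p * q)) := by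
      rw [← hleft, hy2, SemidirectProduct.one_left, DihedralGroup.one_def]
    have hl0 : l = 0 := by
      have h4 : (2 : ZMod (p * q)) * l = 2 * 0 := by
        rw [two_mul, mul_zero]
        exact DihedralGroup.r.inj hll
      exact (two_isUnit h).mul_left_cancel h4
    apply hyne
    have h5 : y.left = (1 : DihedralGroup (p * q)) := by
      rw [hyl, hl0, DihedralGroup.one_def]
    calc y = SemidirectProduct.inl y.left * SemidirectProduct.inr y.right :=
        (SemidirectProduct.inl_left_mul_inr_right y).symm
      _ = 1 := by rw [h5, hyr, map_one, map_one, one_mul]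

end Statement17Aux

end Mizerka

open Mizerka in
/-- `G_{p,q}^{nil} = N¹_{pq}`, i.e. `N¹_{pq}` is the smallest normal
subgroup of `G_{p,q}` with nilpotent quotient; moreover any two elements of even order
lying in the same coset of `N¹_{pq}` are conjugate in `G_{p,q}`. -/
theorem statement_17 {p q i : ℕ} (h : Hyp p q i) :
    (∃ _hN : (NpqOneSub h).Normal,
      haveI := _hN
      (Group.IsNilpotent (Gpq h ⧸ NpqOneSub h) ∧
       ∀ N : Subgroup (Gpq h), ∀ hM : N.Normal,
         (haveI := hM; Group.IsNilpotent (Gpq h ⧸ N)) → NpqOneSub h ≤ N)) ∧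
    (∀ x y : Gpq h, 2 ∣ orderOf x → 2 ∣ orderOf y → x⁻¹ * y ∈ NpqOneSub h → IsConj x y) := by
  haveI : NeZero q := ⟨h.hq.ne_zero⟩
  haveI : NeZero (p * q) := ⟨Nat.mul_ne_zero h.hp.ne_zero h.hq.ne_zero⟩
  haveI hN : (NpqOneSub h).Normal := NpqOneSub_normal h
  refine ⟨⟨hN, ?_, ?_⟩, ?_⟩
  · -- nilpotent (indeed abelian) quotient
    rw [nilpotent_iff_lowerCentralSeries]
    refine ⟨1, ?_⟩
    rw [lowerCentralSeries_one, commutator_def, eq_bot_iff, Subgroup.commutator_le]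
    intro a _ b _
    rw [Subgroup.mem_bot]
    obtain ⟨x, rfl⟩ := QuotientGroup.mk'_surjective (NpqOneSub h) a
    obtain ⟨y, rfl⟩ := QuotientGroup.mk'_surjective (NpqOneSub h) b
    rw [← map_commutatorElement]
    refine (QuotientGroup.eq_one_iff _).mpr ?_
    rw [mem_NpqOneSub_iff h, map_commutatorElement]
    exact commutatorElement_eq_one_iff_commute.mpr (mul_comm _ _)
  · -- minimality
    intro N hM hnilN g hg
    obtain ⟨hg1, l, hgl⟩ := hg
    obtain ⟨n, hn⟩ := nilpotent_iff_lowerCentralSeries.mp hnilN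
    have haGN : aG h ∈ N := by
      have h1 : QuotientGroup.mk' N (aG h) ∈ Subgroup.lowerCentralSeries (⊤ : Subgroup (Gpq h ⧸ N)) n :=
        lowerCentralSeries.map (QuotientGroup.mk' N) n ⟨aG h, aG_mem_lowerCentralSeries h n, rfl⟩
      rw [hn, Subgroup.mem_bot] at h1
      exact (QuotientGroup.eq_one_iff _).mp h1
    have hgeq : g = aG h ^ l.val := by
      rw [aG_pow h l]
      calc g = SemidirectProduct.inl g.left * SemidirectProduct.inr g.right :=
          (SemidirectProduct.inl_left_mul_inr_right g).symm
        _ = SemidirectProduct.inl (DihedralGroup.r l) := by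
            rw [hgl, hg1, map_one, mul_one]
    rw [hgeq]
    exact pow_mem haGN _
  · -- conjugacy of even-order elements in the same coset
    intro x y hx2 hy2 hxy
    obtain ⟨j, hxj⟩ := even_order_left_sr h x hx2
    obtain ⟨j', hyj⟩ := even_order_left_sr h y hy2
    have hz : y.right = x.right := by
      have h1 : (x⁻¹ * y).right = 1 := hxy.1
      rw [SemidirectProduct.mul_right, SemidirectProduct.inv_right] at h1
      exact (inv_mul_eq_one.mp h1).symm
    set w := (toAdd x.right).val with hw
    obtain ⟨u, hu_eq⟩ := t_isUnit h w
    set m := ((u⁻¹ : (ZMod (p * q))ˣ) : ZMod (p * q)) * (j - j') with hm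
    have htm : (1 + ((h.unit ^ w : (ZMod (p * q))ˣ) : ZMod (p * q))) * m = j - j' := by
      rw [hm, ← hu_eq, Units.mul_inv_cancel_left]
    rw [isConj_iff]
    refine ⟨SemidirectProduct.inl (DihedralGroup.r m), ?_⟩
    have hg_inv : (SemidirectProduct.inl (φ := h.phiG) (DihedralGroup.r m))⁻¹
        = SemidirectProduct.inl (DihedralGroup.r (-m)) := by
      rw [← map_inv]; rfl
    rw [hg_inv]
    calc SemidirectProduct.inl (DihedralGroup.r m) * x * SemidirectProduct.inl (DihedralGroup.r (-m))
        = SemidirectProduct.inl y.left * SemidirectProduct.inr y.right := ?_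
      _ = y := SemidirectProduct.inl_left_mul_inr_right y
    have hleft : (SemidirectProduct.inl (φ := h.phiG) (DihedralGroup.r m) * x
        * SemidirectProduct.inl (DihedralGroup.r (-m))).left = y.left := by
      rw [SemidirectProduct.mul_left, SemidirectProduct.mul_left,
        SemidirectProduct.left_inl, SemidirectProduct.right_inl, map_one,
        MulAut.one_apply, hxj, SemidirectProduct.mul_right, SemidirectProduct.right_inl,
        one_mul, SemidirectProduct.left_inl, h.phiG_r, DihedralGroup.r_mul_sr,
        DihedralGroup.sr_mul_r, hyj]
      congr 1
      rw [← hw]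
      linear_combination -htm
    have hright : (SemidirectProduct.inl (φ := h.phiG) (DihedralGroup.r m) * x
        * SemidirectProduct.inl (DihedralGroup.r (-m))).right = y.right := by
      rw [SemidirectProduct.mul_right, SemidirectProduct.mul_right,
        SemidirectProduct.right_inl, SemidirectProduct.right_inl, one_mul, mul_one, hz]
    calc SemidirectProduct.inl (DihedralGroup.r m) * x * SemidirectProduct.inl (DihedralGroup.r (-m))
        = SemidirectProduct.inl (SemidirectProduct.inl (φ := h.phiG) (DihedralGroup.r m) * x
            * SemidirectProduct.inl (DihedralGroup.r (-m))).left
          * SemidirectProduct.inr (SemidirectProduct.inl (φ := h.phiG) (DihedralGroup.r m) * x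
            * SemidirectProduct.inl (DihedralGroup.r (-m))).right :=
          (SemidirectProduct.inl_left_mul_inr_right _).symm
      _ = SemidirectProduct.inl y.left * SemidirectProduct.inr y.right := by rw [hleft, hright]
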